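/- Let S be an n×n unit upper-triangular matrix over ℚ, and let r, d ∈ ℚⁿ satisfy r_i d_k − r_k d_i = (S⁻¹)_{i,k} − (S⁻¹)_{k,i} for all i, k. Define r^∨_j = ∑_{i=1}^{j} S_{i,j} r_i and d^∨_j = ∑_{i=1}^{j} S_{i,j} d_i for each j. Then for every j with 1 < j ≤ n one has d^∨_{j−1} r^∨_j − r^∨_{j−1} d^∨_j = S_{j−1,j}. In particular, if r^∨_{j−1} and r^∨_j are both positive or both negative, then d^∨_{j−1}/r^∨_{j−1} ≤ d^∨_j/r^∨_j if and only if S_{j−1,j} ≤ 0. -/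

import Mathlib

/-- Let `S` be unit upper-triangular over `ℚ` and `r, d` satisfy
`r i * d k − r k * d i = (S⁻¹) i k − (S⁻¹) k i`.  Define the dual ranks and degrees
`r∨ j = ∑_{i ≤ j} S i j * r i` and `d∨ j = ∑_{i ≤ j} S i j * d i`.  Then for
consecutive indices `i + 1 = j`, `d∨ i * r∨ j − r∨ i * d∨ j = S i j`; in particular
if `r∨ i` and `r∨ j` are both positive or both negative, then
`d∨ i / r∨ i ≤ d∨ j / r∨ j ↔ S i j ≤ 0`. -/
theorem strongly_exceptional_implies_ext12_slopes {n : ℕ}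
    (S : Matrix (Fin n) (Fin n) ℚ)
    (hupper : ∀ i k : Fin n, k < i → S i k = 0)
    (hdiag : ∀ i : Fin n, S i i = 1)
    (r d : Fin n → ℚ)
    (hrel : ∀ i k : Fin n, r i * d k - r k * d i = S⁻¹ i k - S⁻¹ k i)
    (rv dv : Fin n → ℚ)
    (hrv : ∀ j : Fin n, rv j = ∑ i ∈ Finset.Iic j, S i j * r i)
    (hdv : ∀ j : Fin n, dv j = ∑ i ∈ Finset.Iic j, S i j * d i) :
    ∀ i j : Fin n, (i : ℕ) + 1 = (j : ℕ) →
      dv i * rv j - rv i * dv j = S i j ∧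
        (((0 < rv i ∧ 0 < rv j) ∨ (rv i < 0 ∧ rv j < 0)) →
          (dv i / rv i ≤ dv j / rv j ↔ S i j ≤ 0)) := by
  intro i j hij
  have hij' : i < j := by
    rw [Fin.lt_def]; omega
  have hdet : S.det = 1 := by
    rw [Matrix.det_of_upperTriangular (fun a b h => hupper a b h)]
    simp [hdiag]
  have hu : IsUnit S.det := by rw [hdet]; exact isUnit_one
  have hinv : S⁻¹ * S = 1 := Matrix.nonsing_inv_mul S hu
  have hrv' : ∀ j : Fin n, rv j = ∑ a, S a j * r a := by
    intro j
    rw [hrv j]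
    apply Finset.sum_subset (Finset.subset_univ _)
    intro a _ ha
    have hja : j < a := by simpa using ha
    rw [hupper a j hja, zero_mul]
  have hdv' : ∀ j : Fin n, dv j = ∑ a, S a j * d a := by
    intro j
    rw [hdv j]
    apply Finset.sum_subset (Finset.subset_univ _)
    intro a _ ha
    have hja : j < a := by simpa using ha
    rw [hupper a j hja, zero_mul]
  have key : dv i * rv j - rv i * dv j = S i j := by
    rw [hrv' i, hrv' j, hdv' i, hdv' j]
    have expand : (∑ a, S a i * d a) * (∑ b, S b j * r b)
        - (∑ a, S a i * r a) * (∑ b, S b j * d b)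
        = ∑ a, ∑ b, S a i * S b j * (S⁻¹ b a - S⁻¹ a b) := by
      rw [Finset.sum_mul_sum, Finset.sum_mul_sum, ← Finset.sum_sub_distrib]
      refine Finset.sum_congr rfl fun a _ => ?_
      rw [← Finset.sum_sub_distrib]
      refine Finset.sum_congr rfl fun b _ => ?_
      rw [← hrel b a]; ring
    rw [expand]
    have A : ∑ a : Fin n, ∑ b : Fin n, S a i * S b j * S⁻¹ b a
        = ∑ b : Fin n, S b j * ∑ a : Fin n, S⁻¹ b a * S a i := by
      rw [Finset.sum_comm]
      refine Finset.sum_congr rfl fun b _ => ?_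
      rw [Finset.mul_sum]
      exact Finset.sum_congr rfl fun a _ => by ring
    have B : ∑ a : Fin n, ∑ b : Fin n, S a i * S b j * S⁻¹ a b
        = ∑ a : Fin n, S a i * ∑ b : Fin n, S⁻¹ a b * S b j := by
      refine Finset.sum_congr rfl fun a _ => ?_
      rw [Finset.mul_sum]
      exact Finset.sum_congr rfl fun b _ => by ring
    have split : ∑ a : Fin n, ∑ b : Fin n, S a i * S b j * (S⁻¹ b a - S⁻¹ a b)
        = (∑ b : Fin n, S b j * ∑ a : Fin n, S⁻¹ b a * S a i)
          - (∑ a : Fin n, S a i * ∑ b : Fin n, S⁻¹ a b * S b j) := by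
      rw [← A, ← B]
      simp [mul_sub, Finset.sum_sub_distrib]
    rw [split]
    have h1 : ∀ b : Fin n, (∑ a, S⁻¹ b a * S a i) = (1 : Matrix (Fin n) (Fin n) ℚ) b i := by
      intro b; rw [← Matrix.mul_apply, hinv]
    have h2 : ∀ a : Fin n, (∑ b, S⁻¹ a b * S b j) = (1 : Matrix (Fin n) (Fin n) ℚ) a j := by
      intro a; rw [← Matrix.mul_apply, hinv]
    simp only [h1, h2, Matrix.one_apply]
    simp only [mul_ite, mul_one, mul_zero]
    rw [Finset.sum_ite_eq' Finset.univ i (fun b => S b j),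
        Finset.sum_ite_eq' Finset.univ j (fun a => S a i)]
    simp [hupper j i hij']
  refine ⟨key, fun h => ?_⟩
  have hprod : 0 < rv i * rv j := by
    rcases h with ⟨h1, h2⟩ | ⟨h1, h2⟩
    · exact mul_pos h1 h2
    · exact mul_pos_of_neg_of_neg h1 h2
  have hi0 : rv i ≠ 0 := by rcases h with ⟨h1, _⟩ | ⟨h1, _⟩ <;> [exact ne_of_gt h1; exact ne_of_lt h1]
  have hj0 : rv j ≠ 0 := by rcases h with ⟨_, h2⟩ | ⟨_, h2⟩ <;> [exact ne_of_gt h2; exact ne_of_lt h2]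
  rw [← mul_le_mul_iff_of_pos_right hprod]
  have e1 : dv i / rv i * (rv i * rv j) = dv i * rv j := by field_simp
  have e2 : dv j / rv j * (rv i * rv j) = dv j * rv i := by field_simp
  rw [e1, e2]
  constructor
  · intro hle; nlinarith [key]
  · intro hle; nlinarith [key]
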